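/- Let k be a nonnegative integer, A = {0,1,…,k}, X ⊆ A, and X̄ = A ∖ X. Then V(X) = V(X̄) · ∏_{x ∈ X̄} 1/(x!·(k−x)!) · ∏_{i=1}^{k} i!, as an identity of rational numbers. -/

import Mathlib

open Nat Finset

/-- Vandermonde product of a finite set of naturals, as a rational:
`V(S) = ∏_{x,y ∈ S, x < y} (y - x)`. -/
def vand (S : Finset ℕ) : ℚ :=
  ∏ x ∈ S, ∏ y ∈ S.filter (fun y => x < y), ((y : ℚ) - (x : ℚ))

/-- natural-number distance -/
def dn (x y : ℕ) : ℕ := if x < y then y - x else x - y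

lemma dn_cast_lt {x y : ℕ} (h : x < y) : (dn x y : ℚ) = (y : ℚ) - x := by
  rw [dn, if_pos h, Nat.cast_sub h.le]

lemma dn_cast_gt {x y : ℕ} (h : y < x) : (dn x y : ℚ) = (x : ℚ) - y := by
  rw [dn, if_neg (by omega), Nat.cast_sub h.le]

lemma vand_insert {x : ℕ} {S : Finset ℕ} (hx : x ∉ S) :
    vand (insert x S) = vand S * ∏ y ∈ S, (dn x y : ℚ) := by
  unfold vand
  rw [prod_insert hx]
  have h1 : (insert x S).filter (fun y => x < y) = S.filter (fun y => x < y) := by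
    rw [filter_insert, if_neg (lt_irrefl x)]
  have h2 : ∀ a ∈ S, (∏ y ∈ (insert x S).filter (fun y => a < y), ((y : ℚ) - a))
      = (if a < x then ((x : ℚ) - a) else 1) * ∏ y ∈ S.filter (fun y => a < y), ((y : ℚ) - a) := by
    intro a ha
    rw [filter_insert]
    by_cases h : a < x
    · rw [if_pos h, if_pos h, prod_insert (by simp [hx])]
    · rw [if_neg h, if_neg h, one_mul]
  rw [h1, prod_congr rfl h2, prod_mul_distrib]
  have h3 : (∏ y ∈ S, (dn x y : ℚ))
      = (∏ y ∈ S.filter (fun y => x < y), ((y : ℚ) - x))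
        * ∏ a ∈ S, (if a < x then ((x : ℚ) - a) else 1) := by
    rw [← prod_filter, ← prod_filter_mul_prod_filter_not S (fun y => x < y)]
    congr 1
    · exact prod_congr rfl fun y hy => dn_cast_lt (mem_filter.mp hy).2
    · refine Finset.prod_congr (filter_congr fun y hy => ?_) fun y hy => ?_
      · constructor
        · intro h; rcases lt_or_eq_of_le (not_lt.mp h) with h' | h'
          · exact h'
          · exact absurd (h' ▸ hy) hx
        · omega
      · exact dn_cast_gt (mem_filter.mp hy).2
  rw [h3]
  ring

lemma prod_sub_range (n : ℕ) : (∏ y ∈ range n, (n - y)) = n ! := by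
  rw [← Finset.prod_range_add_one_eq_factorial n,
    ← Finset.prod_range_reflect (fun j => j + 1) n]
  exact prod_congr rfl fun y hy => by have := mem_range.mp hy; omega

lemma prod_dn_erase {k x : ℕ} (hx : x < k + 1) :
    (∏ y ∈ (range (k + 1)).erase x, dn x y) = x ! * (k - x)! := by
  have hset : (range (k + 1)).erase x = range x ∪ Ico (x + 1) (k + 1) := by
    ext y; simp only [mem_erase, mem_range, mem_union, mem_Ico]; omega
  have hdisj : Disjoint (range x) (Ico (x + 1) (k + 1)) := by
    rw [disjoint_left]; intro y hy hy'
    simp only [mem_range] at hy; simp only [mem_Ico] at hy'; omega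
  rw [hset, prod_union hdisj]
  congr 1
  · rw [← prod_sub_range x]
    exact prod_congr rfl fun y hy => by
      have := mem_range.mp hy; rw [dn, if_neg (by omega)]
  · rw [Finset.prod_Ico_eq_prod_range, ← Finset.prod_range_add_one_eq_factorial (k - x)]
    have : k + 1 - (x + 1) = k - x := by omega
    rw [this]
    exact prod_congr rfl fun j hj => by rw [dn, if_pos (by omega)]; omega

lemma vand_range (k : ℕ) : vand (range (k + 1)) = ∏ i ∈ Icc 1 k, (i ! : ℚ) := by
  induction k with
  | zero => simp [vand, filter_singleton]
  | succ n ih =>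
    rw [range_add_one, vand_insert (by simp)]
    have h1 : (∏ y ∈ range (n + 1), (dn (n + 1) y : ℚ)) = ((n + 1)! : ℚ) := by
      rw [← Nat.cast_prod]
      congr 1
      rw [← prod_sub_range (n + 1)]
      exact prod_congr rfl fun y hy => by
        have := mem_range.mp hy; rw [dn, if_neg (by omega)]
    rw [ih, h1, ← Finset.prod_Icc_succ_top (by omega : 1 ≤ n + 1)]

lemma key (k : ℕ) (C : Finset ℕ) (hC : C ⊆ range (k + 1)) :
    vand (range (k + 1) \ C) = vand C
      * (∏ x ∈ C, (1 : ℚ) / ((Nat.factorial x : ℚ) * (Nat.factorial (k - x) : ℚ)))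
      * ∏ i ∈ Icc 1 k, (Nat.factorial i : ℚ) := by
  induction C using Finset.induction_on with
  | empty =>
      have h0 : vand ∅ = 1 := by simp [vand]
      rw [sdiff_empty, vand_range, h0, prod_empty]; ring
  | @insert a s ha ih =>
    have hs : s ⊆ range (k + 1) := (subset_insert a s).trans hC
    have hak : a < k + 1 := mem_range.mp (hC (mem_insert_self a s))
    have ham : a ∈ range (k + 1) \ s := mem_sdiff.mpr ⟨mem_range.mpr hak, ha⟩
    have hins : range (k + 1) \ s = insert a ((range (k + 1) \ s).erase a) :=
      (insert_erase ham).symm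
    have hnm : a ∉ (range (k + 1) \ s).erase a := notMem_erase a _
    have hvi : vand (range (k + 1) \ s)
        = vand ((range (k + 1) \ s).erase a)
          * ∏ y ∈ (range (k + 1) \ s).erase a, (dn a y : ℚ) := by
      conv_lhs => rw [hins]
      exact vand_insert hnm
    -- union identity
    have hu : ((range (k + 1) \ s).erase a) ∪ s = (range (k + 1)).erase a := by
      ext y
      simp only [mem_union, mem_erase, mem_sdiff, mem_range]
      constructor
      · rintro (⟨hy1, hy2, _⟩ | hy)
        · exact ⟨hy1, hy2⟩
        · exact ⟨fun h => ha (h ▸ hy), mem_range.mp (hs hy)⟩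
      · rintro ⟨hy1, hy2⟩
        by_cases h : y ∈ s
        · exact Or.inr h
        · exact Or.inl ⟨hy1, hy2, h⟩
    have hdisj : Disjoint ((range (k + 1) \ s).erase a) s := by
      rw [disjoint_left]; intro y hy hy'
      exact (mem_sdiff.mp (mem_of_mem_erase hy)).2 hy'
    have hfac : (∏ y ∈ (range (k + 1) \ s).erase a, (dn a y : ℚ))
        * (∏ y ∈ s, (dn a y : ℚ)) = (a ! : ℚ) * ((k - a)! : ℚ) := by
      rw [← prod_union hdisj, hu, ← Nat.cast_prod, prod_dn_erase hak, Nat.cast_mul]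
    -- rewrite goal pieces
    rw [Finset.sdiff_insert, vand_insert ha, prod_insert ha]
    have ihs := ih hs
    rw [hvi] at ihs
    have hP1 : (∏ y ∈ (range (k + 1) \ s).erase a, (dn a y : ℚ)) ≠ 0 := by
      refine prod_ne_zero_iff.mpr fun y hy => ?_
      have hya : y ≠ a := (mem_erase.mp hy).1
      have : dn a y ≠ 0 := by rw [dn]; split <;> omega
      exact_mod_cast this
    have hfa : (a ! : ℚ) ≠ 0 := Nat.cast_ne_zero.mpr (Nat.factorial_ne_zero a)
    have hfb : ((k - a)! : ℚ) ≠ 0 := Nat.cast_ne_zero.mpr (Nat.factorial_ne_zero _)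
    -- derive
    have hFs : (∏ x ∈ s, (1 : ℚ) / ((x ! : ℚ) * ((k - x)! : ℚ)))
        = (∏ x ∈ s, ((x ! : ℚ) * ((k - x)! : ℚ)))⁻¹ := by
      rw [← Finset.prod_inv_distrib]
      exact prod_congr rfl fun x _ => one_div _
    have hprod : ((a ! : ℚ) * ((k - a)! : ℚ)) ≠ 0 := mul_ne_zero hfa hfb
    have h5 : vand ((range (k + 1) \ s).erase a) * ((a ! : ℚ) * ((k - a)! : ℚ))
        = vand s * (∏ x ∈ s, ((x ! : ℚ) * ((k - x)! : ℚ)))⁻¹ * (∏ i ∈ Icc 1 k, (i ! : ℚ))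
          * ∏ y ∈ s, (dn a y : ℚ) := by
      rw [← hfac, ← hFs]
      linear_combination (∏ y ∈ s, (dn a y : ℚ)) * ihs
    have h6 : vand ((range (k + 1) \ s).erase a)
        = vand s * (∏ x ∈ s, ((x ! : ℚ) * ((k - x)! : ℚ)))⁻¹ * (∏ i ∈ Icc 1 k, (i ! : ℚ))
          * (∏ y ∈ s, (dn a y : ℚ)) / ((a ! : ℚ) * ((k - a)! : ℚ)) := by
      rw [eq_div_iff hprod]; exact h5
    rw [h6, hFs]
    ring

theorem vandermonde_complement (k : ℕ) (X : Finset ℕ) (hX : X ⊆ Finset.range (k + 1)) :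
    vand X = vand (Finset.range (k + 1) \ X)
      * (∏ x ∈ Finset.range (k + 1) \ X,
          (1 : ℚ) / ((Nat.factorial x : ℚ) * (Nat.factorial (k - x) : ℚ)))
      * ∏ i ∈ Finset.Icc 1 k, (Nat.factorial i : ℚ) := by
  have h := key k (Finset.range (k + 1) \ X) (sdiff_subset)
  rwa [sdiff_sdiff_right_self, inf_eq_inter, (Finset.inter_eq_right).mpr hX] at h
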